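/- arXiv:2309.16594 — 3 statements merged into one kernel-verified Lean document; each statement's English description precedes it below -/
import Mathlib

section
/- Let G = (V,E) be a directed graph, let C, D, H ⊆ V, and let h ≥ 1 be an integer. Let Π' = (π'_{s,t}) be a family containing, for some pairs (s,t), a path π'_{s,t} from s to t in G with at most h edges (with |π'_{s,t}| := ∞ when undefined), such that: (i) for all s,t ∈ V for which every walk from s to t in G of length δ_G^h(s,t) avoids all vertices of C ∪ D (in particular whenever δ_G^h(s,t) = ∞), |π'_{s,t}| = δ_G^h(s,t); and (ii) every defined π'_{s,t} with |π'_{s,t}| = h contains a vertex of H. Then for all s ∈ V and t ∈ V ∖ (C ∪ D ∪ H) with δ_G(s,t) < ∞, there is a walk from s to t in G of length exactly δ_G(s,t) that either (a) equals π'_{s,t}, or (b) has a suffix of positive length which is either π'_{r,t} for some r ∈ C ∪ D ∪ H, or an edge (r,q) ∈ E followed by π'_{q,t} for some q ∈ V and r ∈ C ∪ D ∪ H. -/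
open scoped Classical

namespace Paper

variable {V : Type*}

/-- `p` (restricted to indices `0,…,k`) is a walk of length `k` w.r.t. the edge relation `E`. -/
def IsWalk (E : V → V → Prop) (k : ℕ) (p : ℕ → V) : Prop :=
  ∀ i, i < k → E (p i) (p (i + 1))

/-- The distance `δ_G(s,t)`. -/
noncomputable def gdist (E : V → V → Prop) (s t : V) : ℕ∞ :=
  ⨅ (k : ℕ) (_ : ∃ p : ℕ → V, p 0 = s ∧ p k = t ∧ IsWalk E k p), (k : ℕ∞)

/-- The `h`-bounded distance `δ_G^h(s,t)`. -/
noncomputable def bdist (E : V → V → Prop) (h : ℕ) (s t : V) : ℕ∞ :=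
  ⨅ (k : ℕ) (_ : k ≤ h ∧ ∃ p : ℕ → V, p 0 = s ∧ p k = t ∧ IsWalk E k p), (k : ℕ∞)

/-- A (simple) path in the graph `E`. -/
structure Path (E : V → V → Prop) where
  len : ℕ
  vtx : ℕ → V
  isWalk : IsWalk E len vtx
  inj : ∀ i ≤ len, ∀ j ≤ len, vtx i = vtx j → i = j

/-- The length of an optional path, `⊤` if undefined. -/
def plen {E : V → V → Prop} : Option (Path E) → ℕ∞
  | none => ⊤
  | some p => (p.len : ℕ∞)

/-- concatenation of two walks at index `m`. -/
def wcat (m : ℕ) (w u : ℕ → V) : ℕ → V := fun i => if i ≤ m then w i else u (i - m)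

lemma wcat_le {m : ℕ} {w u : ℕ → V} {i : ℕ} (hi : i ≤ m) : wcat m w u i = w i := if_pos hi

lemma wcat_add {m : ℕ} {w u : ℕ → V} (h0 : w m = u 0) (i : ℕ) : wcat m w u (m + i) = u i := by
  rcases Nat.eq_zero_or_pos i with rfl | hi
  · simpa [wcat] using h0
  · have h1 : ¬ (m + i ≤ m) := by omega
    simp [wcat, h1]

lemma wcat_isWalk {E : V → V → Prop} {m l : ℕ} {w u : ℕ → V}
    (hw : ∀ i < m, E (w i) (w (i + 1))) (hu : IsWalk E l u) (h0 : w m = u 0) :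
    IsWalk E (m + l) (wcat m w u) := by
  intro i hi
  by_cases hcase : i < m
  · rw [wcat_le (by omega), wcat_le (by omega)]; exact hw i hcase
  · obtain ⟨j, rfl⟩ : ∃ j, i = m + j := ⟨i - m, by omega⟩
    rw [wcat_add h0, show m + j + 1 = m + (j + 1) from rfl, wcat_add h0]
    exact hu j (by omega)

lemma gdist_le (E : V → V → Prop) {s t : V} {k : ℕ} {w : ℕ → V}
    (h0 : w 0 = s) (hk : w k = t) (hw : IsWalk E k w) : gdist E s t ≤ (k : ℕ∞) :=
  iInf₂_le k ⟨w, h0, hk, hw⟩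

lemma bdist_le (E : V → V → Prop) {h : ℕ} {s t : V} {k : ℕ} {w : ℕ → V}
    (hkh : k ≤ h) (h0 : w 0 = s) (hk : w k = t) (hw : IsWalk E k w) :
    bdist E h s t ≤ (k : ℕ∞) :=
  iInf₂_le k ⟨hkh, w, h0, hk, hw⟩

lemma gdist_le_bdist (E : V → V → Prop) (h : ℕ) (s t : V) : gdist E s t ≤ bdist E h s t :=
  le_iInf₂ fun k hk => gdist_le E hk.2.choose_spec.1 hk.2.choose_spec.2.1 hk.2.choose_spec.2.2

lemma gdist_attained (E : V → V → Prop) {s t : V} (hne : gdist E s t ≠ ⊤) :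
    ∃ (k : ℕ) (w : ℕ → V), w 0 = s ∧ w k = t ∧ IsWalk E k w ∧ (k : ℕ∞) = gdist E s t := by
  have hex : ∃ k : ℕ, ∃ p : ℕ → V, p 0 = s ∧ p k = t ∧ IsWalk E k p := by
    by_contra hc
    apply hne
    simp only [gdist, iInf_eq_top]
    intro k hk
    exact absurd ⟨k, hk⟩ hc
  obtain ⟨w, h0, hk, hw⟩ := Nat.find_spec hex
  refine ⟨Nat.find hex, w, h0, hk, hw, le_antisymm ?_ (gdist_le E h0 hk hw)⟩
  exact le_iInf₂ fun m hm => Nat.cast_le.mpr (Nat.find_le hm)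

lemma suffix_dist (E : V → V → Prop) {q t : V} {d : ℕ} {w : ℕ → V}
    (h0 : w 0 = q) (hd : w d = t) (hw : IsWalk E d w)
    (hmin : (d : ℕ∞) = gdist E q t) {m : ℕ} (hm : m ≤ d) :
    ((d - m : ℕ) : ℕ∞) = gdist E (w m) t := by
  have hsw : IsWalk E (d - m) (fun i => w (m + i)) := fun i hi => hw (m + i) (by omega)
  have hend : (fun i => w (m + i)) (d - m) = t := by
    simp only []
    rw [show m + (d - m) = d by omega, hd]
  have hle : gdist E (w m) t ≤ ((d - m : ℕ) : ℕ∞) := gdist_le E rfl hend hsw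
  have hne : gdist E (w m) t ≠ ⊤ := by
    intro hc
    rw [hc] at hle
    exact (ENat.coe_ne_top _) (top_le_iff.mp hle)
  obtain ⟨l, u, hu0, hul, huw, humin⟩ := gdist_attained E hne
  have hglue : gdist E q t ≤ ((m + l : ℕ) : ℕ∞) := by
    refine gdist_le E (s := q) (w := wcat m w u) ?_ ?_ ?_
    · rw [wcat_le (Nat.zero_le m), h0]
    · rw [wcat_add hu0.symm, hul]
    · exact wcat_isWalk (fun i hi => hw i (by omega)) huw hu0.symm
  have hdm : d ≤ m + l := by
    rw [← hmin] at hglue; exact_mod_cast hglue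
  have hlm : l ≤ d - m := by
    rw [← humin] at hle; exact_mod_cast hle
  have : l = d - m := by omega
  rw [humin.symm, this]


/-- The suffix structure (option (b)) of the conclusion. -/
def Conc (E : V → V → Prop) (π' : V → V → Option (Path E)) (C D H : Set V) (t : V)
    (k : ℕ) (wv : ℕ → V) : Prop :=
  ∃ j, j < k ∧
    ((∃ r, (r ∈ C ∨ r ∈ D ∨ r ∈ H) ∧
        ∃ p, π' r t = some p ∧ p.len = k - j ∧ ∀ i ≤ p.len, wv (j + i) = p.vtx i) ∨
     (∃ qv r, (r ∈ C ∨ r ∈ D ∨ r ∈ H) ∧ E r qv ∧ wv j = r ∧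
        ∃ p, π' qv t = some p ∧ p.len = k - j - 1 ∧
          ∀ i ≤ p.len, wv (j + 1 + i) = p.vtx i))

lemma Conc.shift {E : V → V → Prop} {π' : V → V → Option (Path E)} {C D H : Set V} {t : V}
    {d' off : ℕ} {u wv : ℕ → V} (hc : Conc E π' C D H t d' u)
    (hoff : ∀ i, wv (off + i) = u i) : Conc E π' C D H t (off + d') wv := by
  obtain ⟨j, hj, hopt⟩ := hc
  refine ⟨off + j, by omega, ?_⟩
  rcases hopt with ⟨r, hr, p, hp, hlen, hvtx⟩ | ⟨qv, r, hr, hE, hwj, p, hp, hlen, hvtx⟩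
  · refine Or.inl ⟨r, hr, p, hp, by omega, fun i hi => ?_⟩
    rw [show off + j + i = off + (j + i) by omega, hoff]
    exact hvtx i hi
  · refine Or.inr ⟨qv, r, hr, hE, by rw [hoff j]; exact hwj, p, hp, by omega, fun i hi => ?_⟩
    rw [show off + j + 1 + i = off + (j + 1 + i) by omega, hoff]
    exact hvtx i hi

lemma core (E : V → V → Prop) (C D H : Set V) (h : ℕ)
    (π' : V → V → Option (Path E))
    (hπ' : ∀ s t : V, ∀ p, π' s t = some p →
      p.vtx 0 = s ∧ p.vtx p.len = t ∧ p.len ≤ h)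
    (hi : ∀ s t : V,
      (∀ (k : ℕ) (wv : ℕ → V), wv 0 = s → wv k = t → IsWalk E k wv →
        (k : ℕ∞) = bdist E h s t → ∀ i ≤ k, wv i ∉ C ∧ wv i ∉ D) →
      plen (π' s t) = bdist E h s t) :
    ∀ d, d ≤ h → ∀ q t : V, t ∉ C → t ∉ D → t ∉ H → (d : ℕ∞) = gdist E q t →
      ∃ wv : ℕ → V, wv 0 = q ∧ wv d = t ∧ IsWalk E d wv ∧
        ((∃ p, π' q t = some p ∧ p.len = d ∧ ∀ i ≤ d, wv i = p.vtx i) ∨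
          Conc E π' C D H t d wv) := by
  intro d
  induction d using Nat.strong_induction_on with
  | _ d IH =>
  intro hdh q t htC htD htH hdist
  -- bdist = d
  obtain ⟨k₀, w₀, hw₀0, hw₀k, hw₀walk, hw₀min⟩ :=
    gdist_attained E (s := q) (t := t) (by rw [← hdist]; exact ENat.coe_ne_top d)
  have hk₀ : k₀ = d := by
    have := hw₀min.trans hdist.symm; exact_mod_cast this
  rw [hk₀] at hw₀k hw₀walk
  have hbd : bdist E h q t = (d : ℕ∞) := by
    refine le_antisymm (bdist_le E hdh hw₀0 hw₀k hw₀walk) ?_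
    rw [hdist]; exact gdist_le_bdist E h q t
  by_cases hc : ∀ (k : ℕ) (wv : ℕ → V), wv 0 = q → wv k = t → IsWalk E k wv →
      (k : ℕ∞) = bdist E h q t → ∀ i ≤ k, wv i ∉ C ∧ wv i ∉ D
  · -- option (a)
    have hplen := hi q t hc
    rw [hbd] at hplen
    cases hp : π' q t with
    | none => rw [hp] at hplen; simp [plen] at hplen
    | some p =>
      rw [hp] at hplen
      have hlen : p.len = d := by
        simp only [plen] at hplen; exact_mod_cast hplen
      obtain ⟨hv0, hvl, _⟩ := hπ' q t p hp
      refine ⟨p.vtx, hv0, by rw [← hlen]; exact hvl, by rw [← hlen]; exact p.isWalk, ?_⟩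
      exact Or.inl ⟨p, rfl, hlen, fun i _ => rfl⟩
  · push_neg at hc
    obtain ⟨k, w, hw0, hwk, hwalk, hkbd, i, hik, hiCD⟩ := hc
    have hkd : k = d := by rw [hbd] at hkbd; exact_mod_cast hkbd
    subst hkd
    have hwmin : (k : ℕ∞) = gdist E q t := hdist  -- k = d now
    set P : ℕ → Prop := fun n => w n ∈ C ∨ w n ∈ D ∨ w n ∈ H with hP
    have hPi : P i := by
      by_cases hC : w i ∈ C
      · exact Or.inl hC
      · exact Or.inr (Or.inl (hiCD hC))
    set j := Nat.findGreatest P k with hj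
    have hjk : j ≤ k := Nat.findGreatest_le k
    have hPj : P j := Nat.findGreatest_spec hik hPi
    have hPt : ¬ P k := by
      simp only [hP, hwk]
      rintro (hx | hx | hx) <;> [exact htC hx; exact htD hx; exact htH hx]
    have hjlt : j < k := lt_of_le_of_ne hjk (fun he => hPt (he ▸ hPj))
    set d' := k - (j + 1) with hd'
    have hIH := IH d' (by omega) (by omega) (w (j + 1)) t htC htD htH
      (by
        have := suffix_dist E hw0 hwk hwalk hdist (m := j + 1) (by omega)
        rwa [show k - (j + 1) = d' from rfl] at this)
    obtain ⟨u, hu0, hud', huwalk, hucase⟩ := hIH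
    have hglue0 : w (j + 1) = u 0 := hu0.symm
    have hadd : ∀ i', wcat (j + 1) w u (j + 1 + i') = u i' := wcat_add hglue0
    have hkdec : k = (j + 1) + d' := by clear hucase; omega
    have hkdec' : (j + 1) + d' = k := by clear hucase; omega
    refine ⟨wcat (j + 1) w u, by rw [wcat_le (Nat.zero_le _)]; exact hw0, ?_, ?_, Or.inr ?_⟩
    · rw [hkdec, hadd d', hud']
    · have := wcat_isWalk (fun i' hi' => hwalk i' (Nat.lt_of_lt_of_le hi' (by omega))) huwalk hglue0
      rwa [hkdec'] at this
    · rcases hucase with ⟨p, hp, hplen, hpv⟩ | hconc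
      · have hplen' : p.len = k - j - 1 := by omega
        refine ⟨j, hjlt, Or.inr ⟨w (j + 1), w j, hPj, hwalk j (by omega),
          wcat_le (by omega), p, hp, hplen', fun i' hi' => ?_⟩⟩
        rw [hadd i']
        exact hpv i' (by omega)
      · have := Conc.shift hconc hadd
        rwa [hkdec'] at this


/-- **Lemma 6.3 (shortest-path suffix decomposition).** Assume `Π'` consists of paths of `G`
with at most `h` edges such that (i) `|π'_{s,t}| = δ_G^h(s,t)` whenever every walk `s → t` in
`G` of length `δ_G^h(s,t)` avoids `C ∪ D`, and (ii) every defined `π'_{s,t}` with exactly `h`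
edges contains a vertex of `H`.  Then for every `s` and every `t ∉ C ∪ D ∪ H` reachable from
`s`, some shortest walk `s → t` in `G` either (a) equals `π'_{s,t}` or (b) has a suffix of
positive length that is `π'_{r,t}` with `r ∈ C ∪ D ∪ H`, or an edge `(r,q)` with
`r ∈ C ∪ D ∪ H` followed by `π'_{q,t}`. -/
theorem suffix_decomposition {V : Type*} (E : V → V → Prop)
    (C D H : Set V) (h : ℕ) (hh : 1 ≤ h)
    (π' : V → V → Option (Path E))
    (hπ' : ∀ s t : V, ∀ p, π' s t = some p →
      p.vtx 0 = s ∧ p.vtx p.len = t ∧ p.len ≤ h)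
    (hi : ∀ s t : V,
      (∀ (k : ℕ) (wv : ℕ → V), wv 0 = s → wv k = t → IsWalk E k wv →
        (k : ℕ∞) = bdist E h s t → ∀ i ≤ k, wv i ∉ C ∧ wv i ∉ D) →
      plen (π' s t) = bdist E h s t)
    (hii : ∀ s t : V, ∀ p, π' s t = some p → p.len = h → ∃ i ≤ p.len, p.vtx i ∈ H) :
    ∀ s t : V, t ∉ C → t ∉ D → t ∉ H → gdist E s t ≠ ⊤ →
      ∃ (k : ℕ) (wv : ℕ → V), wv 0 = s ∧ wv k = t ∧ IsWalk E k wv ∧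
        (k : ℕ∞) = gdist E s t ∧
        ((∃ p, π' s t = some p ∧ p.len = k ∧ ∀ i ≤ k, wv i = p.vtx i) ∨
         (∃ j, j < k ∧
           ((∃ r, (r ∈ C ∨ r ∈ D ∨ r ∈ H) ∧
              ∃ p, π' r t = some p ∧ p.len = k - j ∧ ∀ i ≤ p.len, wv (j + i) = p.vtx i) ∨
            (∃ qv r, (r ∈ C ∨ r ∈ D ∨ r ∈ H) ∧ E r qv ∧ wv j = r ∧
              ∃ p, π' qv t = some p ∧ p.len = k - j - 1 ∧
                ∀ i ≤ p.len, wv (j + 1 + i) = p.vtx i)))) := by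

  intro s t htC htD htH hne
  obtain ⟨k, w, hw0, hwk, hwalk, hkmin⟩ := gdist_attained E hne
  by_cases hkh : k ≤ h
  · obtain ⟨wv, h0, hk, hwv, hcase⟩ := core E C D H h π' hπ' hi k hkh s t htC htD htH hkmin
    exact ⟨k, wv, h0, hk, hwv, hkmin, hcase⟩
  · -- k > h
    have hhk : h ≤ k := le_of_not_ge hkh
    set m := k - h with hm
    have hmk : m + h = k := by omega
    have hgm : ((h : ℕ) : ℕ∞) = gdist E (w m) t := by
      have := suffix_dist E hw0 hwk hwalk hkmin (m := m) (by omega)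
      rwa [show k - m = h by omega] at this
    obtain ⟨u, hu0, huh, huwalk, hucase⟩ :=
      core E C D H h π' hπ' hi h le_rfl (w m) t htC htD htH hgm
    -- glue w (up to m) with u
    have hglue0 : w m = u 0 := hu0.symm
    have hadd : ∀ i', wcat m w u (m + i') = u i' := wcat_add hglue0
    have hw₁walk : IsWalk E k (wcat m w u) := by
      have := wcat_isWalk (fun i' hi' => hwalk i' (by clear hucase; omega)) huwalk hglue0
      rwa [hmk] at this
    have hw₁0 : wcat m w u 0 = s := by rw [wcat_le (Nat.zero_le m)]; exact hw0
    have hw₁k : wcat m w u k = t := by rw [← hmk, hadd h, huh]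
    rcases hucase with ⟨p, hp, hplen, hpv⟩ | hconc
    · -- u is π'_{w m, t} of length h; it contains a vertex of H
      obtain ⟨i, hip, hiH⟩ := hii (w m) t p hp hplen
      have hih : i ≤ h := by omega
      have hilt : i < h := by
        by_contra h'
        have hieq : i = h := by omega
        have hvt : p.vtx i = t := by rw [hieq, ← hpv h le_rfl]; exact huh
        exact htH (hvt ▸ hiH)
      rcases Nat.eq_zero_or_pos i with hi0 | hipos
      · -- r = w m ∈ H, suffix π'_{w m, t} directly
        subst hi0
        refine ⟨k, wcat m w u, hw₁0, hw₁k, hw₁walk, hkmin, Or.inr ⟨m, by omega, Or.inl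
          ⟨w m, Or.inr (Or.inr ?_), p, hp, by omega, fun i' hi' => ?_⟩⟩⟩
        · have : p.vtx 0 = w m := (hπ' (w m) t p hp).1
          rwa [this] at hiH
        · rw [hadd i']; exact hpv i' (by omega)
      · -- recurse from r = u i ∈ H
        have hrH : u i ∈ H := by rw [hpv i hih]; exact hiH
        have hgr : (((h - i : ℕ)) : ℕ∞) = gdist E (u i) t :=
          suffix_dist E hu0 huh huwalk hgm (le_of_lt hilt)
        obtain ⟨u₂, hu₂0, hu₂d, hu₂walk, hu₂case⟩ :=
          core E C D H h π' hπ' hi (h - i) (by omega) (u i) t htC htD htH hgr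
        have hglue1 : wcat m w u (m + i) = u₂ 0 := by rw [hadd i, hu₂0]
        have hadd₂ : ∀ i', wcat (m + i) (wcat m w u) u₂ (m + i + i') = u₂ i' :=
          wcat_add hglue1
        have hkdec : (m + i) + (h - i) = k := by clear hu₂case; omega
        have hwvwalk : IsWalk E k (wcat (m + i) (wcat m w u) u₂) := by
          have := wcat_isWalk (fun i' hi' => hw₁walk i' (by clear hu₂case; omega))
            hu₂walk hglue1
          rwa [hkdec] at this
        have hwv0 : wcat (m + i) (wcat m w u) u₂ 0 = s := by
          rw [wcat_le (Nat.zero_le _)]; exact hw₁0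
        have hwvk : wcat (m + i) (wcat m w u) u₂ k = t := by
          rw [← hkdec, hadd₂ (h - i), hu₂d]
        refine ⟨k, wcat (m + i) (wcat m w u) u₂, hwv0, hwvk, hwvwalk, hkmin, Or.inr ?_⟩
        rcases hu₂case with ⟨p₂, hp₂, hp₂len, hp₂v⟩ | hconc₂
        · have hp₂len' : p₂.len = k - (m + i) := by omega
          refine ⟨m + i, by omega, Or.inl ⟨u i, Or.inr (Or.inr hrH), p₂, hp₂, hp₂len',
            fun i' hi' => ?_⟩⟩
          rw [hadd₂ i']
          exact hp₂v i' (by omega)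
        · have := Conc.shift hconc₂ hadd₂
          rwa [hkdec] at this
    · -- u already has the suffix structure; shift it
      have := Conc.shift hconc hadd
      rw [hmk] at this
      exact ⟨k, wcat m w u, hw₁0, hw₁k, hw₁walk, hkmin, Or.inr this⟩


end Paper
end

section
/- Let G = (V,E) be a directed graph with |V| = n ≥ 1 and let X ⊆ V. Let A be a V × V matrix with entries in ℕ ∪ {∞} satisfying: (H0) A_{u,u} = 0 for all u ∈ V, A_{u,v} = 1 for all (u,v) ∈ E with u ≠ v, and A_{u,v} ≥ δ_G(u,v) for all u,v ∈ V; (H1) for all s ∈ V ∖ X and t ∈ V with δ_G(s,t) < ∞: either A_{s,t} = δ_G(s,t), or there exist q ∈ V and r ∈ X with A_{s,q} = δ_G(s,q), δ_G(q,r) ≤ 1, δ_G(s,q) + δ_G(q,r) ≥ 1, and δ_G(s,t) = δ_G(s,q) + δ_G(q,r) + δ_G(r,t); (H2) for all s ∈ V and t ∈ V ∖ X with δ_G(s,t) < ∞: either A_{s,t} = δ_G(s,t), or there exist q ∈ V and r ∈ X with A_{q,t} = δ_G(q,t), δ_G(r,q) ≤ 1, δ_G(r,q) + δ_G(q,t)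 ≥ 1, and δ_G(s,t) = δ_G(s,r) + δ_G(r,q) + δ_G(q,t). Define A* := min( A , (A ⋆ A[V,X]) ⋆ (A[X,V] ⋆ A ⋆ A[V,X])^n ⋆ (A[X,V] ⋆ A) ), where the power is with respect to the min-plus product and min is entrywise. Then A*_{s,t} = δ_G(s,t) for all s,t ∈ V. -/
open scoped Classical

namespace Paper

variable {V : Type*}

/-- Min-plus (tropical) product of `V × V` matrices with entries in `ℕ∞`. -/
noncomputable def mp [Fintype V] (M N : V → V → ℕ∞) : V → V → ℕ∞ :=
  fun i j => ⨅ k : V, M i k + N k j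

/-- Min-plus powers (`mpPow M 0` is the min-plus identity: `0` on the diagonal, `⊤` off it). -/
noncomputable def mpPow [Fintype V] (M : V → V → ℕ∞) : ℕ → V → V → ℕ∞
  | 0 => fun i j => if i = j then 0 else ⊤
  | m + 1 => mp (mpPow M m) M

/-- The submatrix `M[X,V]` (rows `X`), represented with `⊤`-padding outside the rows `X`. -/
noncomputable def maskRow (X : Set V) (M : V → V → ℕ∞) : V → V → ℕ∞ :=
  fun i j => if i ∈ X then M i j else ⊤

/-- The submatrix `M[V,X]` (columns `X`), represented with `⊤`-padding outside the columns `X`. -/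
noncomputable def maskCol (X : Set V) (M : V → V → ℕ∞) : V → V → ℕ∞ :=
  fun i j => if j ∈ X then M i j else ⊤

section Graph
variable (E : V → V → Prop)

theorem gdist_le_of_walk {s t : V} {k : ℕ} {p : ℕ → V}
    (h0 : p 0 = s) (hk : p k = t) (hw : IsWalk E k p) : gdist E s t ≤ (k : ℕ∞) :=
  iInf₂_le k ⟨p, h0, hk, hw⟩

theorem gdist_self (s : V) : gdist E s s = 0 := by
  refine le_antisymm ?_ zero_le
  have := gdist_le_of_walk E (s := s) (t := s) (k := 0) (p := fun _ => s)
    rfl rfl (fun i hi => absurd hi (Nat.not_lt_zero i))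
  simpa using this

theorem gdist_spec {s t : V} (h : gdist E s t ≠ ⊤) :
    ∃ k : ℕ, gdist E s t = (k : ℕ∞) ∧
      (∃ p : ℕ → V, p 0 = s ∧ p k = t ∧ IsWalk E k p) ∧
      ∀ k' : ℕ, k' < k → ¬ ∃ p : ℕ → V, p 0 = s ∧ p k' = t ∧ IsWalk E k' p := by
  have hex : ∃ k : ℕ, ∃ p : ℕ → V, p 0 = s ∧ p k = t ∧ IsWalk E k p := by
    by_contra hne
    push_neg at hne
    apply h
    unfold gdist
    simp only [iInf_eq_top]
    intro k hk
    exact absurd hk (by simpa using hne k)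
  classical
  obtain ⟨p, hp0, hpk, hw⟩ := Nat.find_spec hex
  refine ⟨Nat.find hex, ?_, ⟨p, hp0, hpk, hw⟩, fun k' hk' => Nat.find_min hex hk'⟩
  refine le_antisymm (gdist_le_of_walk E hp0 hpk hw) ?_
  refine le_iInf fun k => le_iInf fun hk => ?_
  exact_mod_cast Nat.find_min' hex hk

theorem gdist_triangle (s u t : V) : gdist E s t ≤ gdist E s u + gdist E u t := by
  by_cases h1 : gdist E s u = ⊤
  · simp [h1]
  by_cases h2 : gdist E u t = ⊤
  · simp [h2]
  obtain ⟨k1, hk1, ⟨p1, hp10, hp1k, hw1⟩, -⟩ := gdist_spec E h1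
  obtain ⟨k2, hk2, ⟨p2, hp20, hp2k, hw2⟩, -⟩ := gdist_spec E h2
  rw [hk1, hk2]
  have : gdist E s t ≤ ((k1 + k2 : ℕ) : ℕ∞) := by
    refine gdist_le_of_walk E (p := fun i => if i < k1 then p1 i else p2 (i - k1)) ?_ ?_ ?_
    · by_cases h : 0 < k1
      · simpa [h] using hp10
      · have hk1z : k1 = 0 := by omega
        simp only [h, if_false]
        rw [show (0 : ℕ) - k1 = 0 by omega, hp20, ← hp1k, hk1z, hp10]
    · have : ¬ (k1 + k2 < k1) := by omega
      simp only [this, if_false]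
      rw [show k1 + k2 - k1 = k2 by omega, hp2k]
    · intro i hi
      by_cases h : i + 1 ≤ k1
      · by_cases h' : i + 1 < k1
        · have hi1 : i < k1 := by omega
          simpa [hi1, h'] using hw1 i hi1
        · have hik : i + 1 = k1 := by omega
          have hi1 : i < k1 := by omega
          have : p2 (i + 1 - k1) = p1 (i + 1) := by
            rw [show i + 1 - k1 = 0 by omega, hp20, ← hp1k, hik]
          simp only [hi1, if_true, show ¬ (i + 1 < k1) by omega, if_false, this]
          exact hw1 i hi1
      · have hi1 : ¬ (i < k1) := by omega
        have hi2 : ¬ (i + 1 < k1) := by omega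
        simp only [hi1, hi2, if_false]
        have : i + 1 - k1 = (i - k1) + 1 := by omega
        rw [this]
        exact hw2 (i - k1) (by omega)
  exact this.trans (by push_cast; rfl)

end Graph
section Graph2
variable (E : V → V → Prop)

theorem splice {k i j : ℕ} {p : ℕ → V} (hij : i < j) (hjk : j ≤ k)
    (hw : IsWalk E k p) (hp : p i = p j) :
    ∃ p' : ℕ → V, p' 0 = p 0 ∧ p' (k - (j - i)) = p k ∧ IsWalk E (k - (j - i)) p' := by
  refine ⟨fun m => if m < i then p m else p (m + (j - i)), ?_, ?_, ?_⟩
  · by_cases h : 0 < i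
    · simp [h]
    · have hi : i = 0 := by omega
      simp only [h, if_false]
      rw [show 0 + (j - i) = j by omega, ← hp, hi]
  · have h : ¬ (k - (j - i) < i) := by omega
    simp only [h, if_false]
    rw [show k - (j - i) + (j - i) = k by omega]
  · intro m hm
    by_cases h : m + 1 ≤ i
    · by_cases h' : m + 1 < i
      · have hmi : m < i := by omega
        simpa [hmi, h'] using hw m (by omega)
      · have hmi : m < i := by omega
        have heq : m + 1 = i := by omega
        have : p (m + 1 + (j - i)) = p (m + 1) := by
          rw [show m + 1 + (j - i) = j by omega, ← hp, heq]
        simp only [hmi, if_true, show ¬ (m + 1 < i) by omega, if_false, this]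
        exact hw m (by omega)
    · have h1 : ¬ (m < i) := by omega
      have h2 : ¬ (m + 1 < i) := by omega
      simp only [h1, h2, if_false]
      rw [show m + 1 + (j - i) = (m + (j - i)) + 1 by omega]
      exact hw (m + (j - i)) (by omega)

theorem gdist_le_card [Fintype V] {s t : V} (h : gdist E s t ≠ ⊤) :
    gdist E s t ≤ (Fintype.card V : ℕ∞) := by
  obtain ⟨k, hk, ⟨p, hp0, hpk, hw⟩, hmin⟩ := gdist_spec E h
  rw [hk]
  have hkle : k ≤ Fintype.card V := by
    by_contra hgt
    push_neg at hgt
    set n := Fintype.card V with hncard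
    have hcard : Fintype.card V < Fintype.card (Fin (n + 1)) := by simp [hncard]
    obtain ⟨a, b, hab, hpab⟩ :=
      Fintype.exists_ne_map_eq_of_card_lt (fun i : Fin (n + 1) => p (i : ℕ)) hcard
    have hb : (b : ℕ) < n + 1 := b.isLt
    have ha : (a : ℕ) < n + 1 := a.isLt
    rcases Ne.lt_or_gt (fun hval : (a:ℕ) = (b:ℕ) => hab (Fin.ext hval)) with hlt | hlt
    · obtain ⟨p', h0', hk', hw'⟩ := splice E (i := (a : ℕ)) (j := (b : ℕ)) (p := p)
        hlt (by omega) hw hpab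
      exact hmin _ (by omega) ⟨p', by rw [h0', hp0], by rw [hk', hpk], hw'⟩
    · obtain ⟨p', h0', hk', hw'⟩ := splice E (i := (b : ℕ)) (j := (a : ℕ)) (p := p)
        hlt (by omega) hw hpab.symm
      exact hmin _ (by omega) ⟨p', by rw [h0', hp0], by rw [hk', hpk], hw'⟩
  exact_mod_cast hkle

end Graph2


section ENatInf

theorem enat_add_iInf {ι : Type*} [Finite ι] [Nonempty ι] (a : ℕ∞) (f : ι → ℕ∞) :
    a + ⨅ i, f i = ⨅ i, a + f i := by
  obtain ⟨i0, hi0⟩ := Finite.exists_min f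
  have h : ⨅ j, f j = f i0 := le_antisymm (iInf_le f i0) (le_iInf hi0)
  rw [h]
  exact le_antisymm (le_iInf fun i => add_le_add_right (hi0 i) a) (iInf_le _ i0)

theorem enat_iInf_add {ι : Type*} [Finite ι] [Nonempty ι] (a : ℕ∞) (f : ι → ℕ∞) :
    (⨅ i, f i) + a = ⨅ i, f i + a := by
  obtain ⟨i0, hi0⟩ := Finite.exists_min f
  have h : ⨅ j, f j = f i0 := le_antisymm (iInf_le f i0) (le_iInf hi0)
  rw [h]
  exact le_antisymm (le_iInf fun i => add_le_add_left (hi0 i) a) (iInf_le _ i0)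

end ENatInf

section MPAlg
variable [Fintype V]

theorem mp_le (P Q : V → V → ℕ∞) (i k j : V) : mp P Q i j ≤ P i k + Q k j :=
  iInf_le _ k

theorem mp_assoc [Nonempty V] (P Q R : V → V → ℕ∞) :
    mp (mp P Q) R = mp P (mp Q R) := by
  funext i j
  apply le_antisymm
  · refine le_iInf fun k => ?_
    have h : P i k + mp Q R k j = ⨅ l, P i k + (Q k l + R l j) :=
      enat_add_iInf _ _
    rw [h]
    refine le_iInf fun l => ?_
    calc mp (mp P Q) R i j ≤ mp P Q i l + R l j := mp_le _ _ i l j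
      _ ≤ (P i k + Q k l) + R l j := add_le_add_left (mp_le _ _ i k l) _
      _ = P i k + (Q k l + R l j) := add_assoc _ _ _
  · refine le_iInf fun l => ?_
    have h : mp P Q i l + R l j = ⨅ k, (P i k + Q k l) + R l j :=
      enat_iInf_add _ _
    rw [h]
    refine le_iInf fun k => ?_
    calc mp P (mp Q R) i j ≤ P i k + mp Q R k j := mp_le _ _ i k j
      _ ≤ P i k + (Q k l + R l j) := add_le_add_right (mp_le _ _ k l j) _
      _ = (P i k + Q k l) + R l j := (add_assoc _ _ _).symm

theorem mp_id_left (Q : V → V → ℕ∞) :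
    mp (fun i j => if i = j then (0 : ℕ∞) else ⊤) Q = Q := by
  funext i j
  apply le_antisymm
  · simpa using mp_le (fun i j => if i = j then (0 : ℕ∞) else ⊤) Q i i j
  · refine le_iInf fun k => ?_
    by_cases h : i = k
    · subst h; simp
    · simp [h]

theorem mp_id_right (Q : V → V → ℕ∞) :
    mp Q (fun i j => if i = j then (0 : ℕ∞) else ⊤) = Q := by
  funext i j
  apply le_antisymm
  · simpa using mp_le Q (fun i j => if i = j then (0 : ℕ∞) else ⊤) i j j
  · refine le_iInf fun k => ?_
    by_cases h : k = j
    · subst h; simp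
    · simp [h]

theorem mpPow_succ_left [Nonempty V] (M : V → V → ℕ∞) (m : ℕ) :
    mpPow M (m + 1) = mp M (mpPow M m) := by
  induction m with
  | zero => show mp (mpPow M 0) M = mp M (mpPow M 0); rw [mpPow, mp_id_left, mp_id_right]
  | succ m ih =>
    show mp (mpPow M (m + 1)) M = mp M (mpPow M (m + 1))
    conv_lhs => rw [ih]
    rw [mp_assoc]
    rfl

theorem mp_pow_succ_bound [Nonempty V] (M R : V → V → ℕ∞) (m : ℕ) (x z t : V) :
    mp (mpPow M (m + 1)) R x t ≤ M x z + mp (mpPow M m) R z t := by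
  rw [mpPow_succ_left, mp_assoc]
  exact iInf_le _ z

theorem mp_pow_pad (M R : V → V → ℕ∞)
    (h : ∀ z : V, M z z = 0 ∨ ∀ t' : V, R z t' = ⊤) (t : V) :
    ∀ m n : ℕ, m ≤ n → ∀ x : V, mp (mpPow M n) R x t ≤ mp (mpPow M m) R x t := by
  intro m n hmn
  induction n, hmn using Nat.le_induction with
  | base => intro x; exact le_rfl
  | succ n hmn ih =>
    intro x
    refine le_trans ?_ (ih x)
    refine le_iInf fun z => ?_
    rcases h z with hz | hz
    · calc mp (mpPow M (n + 1)) R x t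
          ≤ mpPow M (n + 1) x z + R z t := mp_le _ _ x z t
        _ ≤ (mpPow M n x z + M z z) + R z t :=
            add_le_add_left (mp_le (mpPow M n) M x z z) _
        _ = mpPow M n x z + R z t := by rw [hz, add_zero]
    · rw [hz t]
      simp

end MPAlg

section Key

theorem enat_exists_nat {x : ℕ∞} (h : x ≠ ⊤) : ∃ a : ℕ, (a : ℕ∞) = x := by
  lift x to ℕ using h
  exact ⟨x, rfl⟩

variable [Fintype V]

theorem A_eq_gdist_of_le_one (E : V → V → Prop) (A : V → V → ℕ∞)
    (hdiag : ∀ u : V, A u u = 0) (hedge : ∀ u v : V, u ≠ v → E u v → A u v = 1)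
    {q r : V} (h : gdist E q r ≤ 1) : A q r = gdist E q r := by
  by_cases hqr : q = r
  · subst hqr; rw [hdiag, gdist_self]
  · have hne : gdist E q r ≠ ⊤ := fun ht => by rw [ht] at h; simp at h
    obtain ⟨k, hk, ⟨p, hp0, hpk, hw⟩, -⟩ := gdist_spec E hne
    have hk1 : k ≤ 1 := by rw [hk] at h; exact_mod_cast h
    interval_cases k
    · exact absurd (hp0.symm.trans hpk) hqr
    · have hE : E q r := by rw [← hp0, ← hpk]; exact hw 0 (by omega)
      rw [hedge q r hqr hE, hk]
      simp

theorem keyD (E : V → V → Prop) (X : Set V) (A : V → V → ℕ∞)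
    (hdiag : ∀ u : V, A u u = 0) (hedge : ∀ u v : V, u ≠ v → E u v → A u v = 1)
    (H1 : ∀ s t : V, s ∉ X → gdist E s t ≠ ⊤ →
      A s t = gdist E s t ∨
      ∃ q r : V, r ∈ X ∧ A s q = gdist E s q ∧ gdist E q r ≤ 1 ∧
        1 ≤ gdist E s q + gdist E q r ∧
        gdist E s t = gdist E s q + gdist E q r + gdist E r t) :
    ∀ d : ℕ, ∀ x t : V, x ∈ X → gdist E x t = (d : ℕ∞) →
      ∃ m : ℕ, m ≤ d ∧
        mp (mpPow (mp (mp (maskRow X A) A) (maskCol X A)) m) (mp (maskRow X A) A) x t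
          ≤ (d : ℕ∞) := by
  have hR : ∀ a b c : V, a ∈ X → mp (maskRow X A) A a c ≤ A a b + A b c := by
    intro a b c ha
    simpa [maskRow, ha] using mp_le (maskRow X A) A a b c
  have hM : ∀ a b c e : V, a ∈ X → e ∈ X →
      mp (mp (maskRow X A) A) (maskCol X A) a e ≤ A a b + A b c + A c e := by
    intro a b c e ha he
    calc mp (mp (maskRow X A) A) (maskCol X A) a e
        ≤ mp (maskRow X A) A a c + maskCol X A c e := mp_le _ _ a c e
      _ = mp (maskRow X A) A a c + A c e := by simp [maskCol, he]
      _ ≤ (A a b + A b c) + A c e := add_le_add_left (hR a b c ha) _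
  intro d
  induction d using Nat.strong_induction_on with
  | _ d ih =>
  intro x t hx hd
  have hNe : Nonempty V := ⟨x⟩
  set R := mp (maskRow X A) A with hRdef
  set M := mp R (maskCol X A) with hMdef
  cases d with
  | zero =>
    have hne : gdist E x t ≠ ⊤ := by rw [hd]; exact ENat.coe_ne_top 0
    obtain ⟨k, hk, ⟨p, hp0, hpk, hw⟩, -⟩ := gdist_spec E hne
    have hk0 : k = 0 := by rw [hd] at hk; exact_mod_cast hk.symm
    subst hk0
    have hxt : x = t := hp0.symm.trans hpk
    subst hxt
    refine ⟨0, le_rfl, ?_⟩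
    calc mp (mpPow M 0) R x x ≤ mpPow M 0 x x + R x x := mp_le _ _ x x x
      _ = R x x := by simp [mpPow]
      _ ≤ A x x + A x x := hR x x x hx
      _ ≤ ((0 : ℕ) : ℕ∞) := by simp [hdiag]
  | succ d =>
    have hne : gdist E x t ≠ ⊤ := by rw [hd]; exact ENat.coe_ne_top _
    obtain ⟨k, hk, ⟨p, hp0, hpk, hw⟩, -⟩ := gdist_spec E hne
    have hkd : k = d + 1 := by rw [hd] at hk; exact_mod_cast hk.symm
    subst hkd
    set q := p 1 with hq
    have hE : E x q := by rw [← hp0]; exact hw 0 (by omega)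
    have hxq1 : gdist E x q ≤ (1 : ℕ∞) := by
      have := gdist_le_of_walk E (k := 1) (p := p) hp0 rfl (fun i hi => hw i (by omega))
      simpa using this
    have hqt_le : gdist E q t ≤ (d : ℕ∞) :=
      gdist_le_of_walk E (p := fun i => p (i + 1)) rfl hpk (fun i hi => hw (i + 1) (by omega))
    have hne_qt : gdist E q t ≠ ⊤ := fun h => by
      rw [h] at hqt_le; exact absurd hqt_le (by simp)
    obtain ⟨e, he⟩ := enat_exists_nat hne_qt
    have he_le : e ≤ d := by rw [← he] at hqt_le; exact Nat.cast_le.mp hqt_le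
    have hge : ((d + 1 : ℕ) : ℕ∞) ≤ ((1 + e : ℕ) : ℕ∞) := by
      calc ((d + 1 : ℕ) : ℕ∞) = gdist E x t := hd.symm
        _ ≤ gdist E x q + gdist E q t := gdist_triangle E x q t
        _ ≤ 1 + (e : ℕ∞) := add_le_add hxq1 (le_of_eq he.symm)
        _ = ((1 + e : ℕ) : ℕ∞) := by push_cast; ring
    have hed : e = d := by
      have : d + 1 ≤ 1 + e := by exact_mod_cast hge
      omega
    have hqt : gdist E q t = (d : ℕ∞) := by rw [← he, hed]; try rfl
    have hxqne : x ≠ q := by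
      intro h
      have h2 : ((d + 1 : ℕ) : ℕ∞) = (d : ℕ∞) := by rw [← hd, h, hqt]
      have h3 : d + 1 = d := by exact_mod_cast h2
      omega
    have hAxq : A x q = 1 := hedge x q hxqne hE
    by_cases hqX : q ∈ X
    · obtain ⟨m, hm, hb⟩ := ih d (by omega) q t hqX hqt
      refine ⟨m + 1, by omega, ?_⟩
      have hMxq : M x q ≤ 1 := by
        refine (hM x x q q hx hqX).trans ?_
        rw [hdiag, hAxq, hdiag]
        simp
      calc mp (mpPow M (m + 1)) R x t
          ≤ M x q + mp (mpPow M m) R q t := mp_pow_succ_bound M R m x q t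
        _ ≤ 1 + (d : ℕ∞) := add_le_add hMxq hb
        _ = ((d + 1 : ℕ) : ℕ∞) := by push_cast; ring
    · rcases H1 q t hqX hne_qt with hAqt | ⟨q', r, hrX, hAqq', hq'r1, -, hsum⟩
      · refine ⟨0, by omega, ?_⟩
        calc mp (mpPow M 0) R x t ≤ mpPow M 0 x x + R x t := mp_le _ _ x x t
          _ = R x t := by simp [mpPow]
          _ ≤ A x q + A q t := hR x q t hx
          _ = 1 + (d : ℕ∞) := by rw [hAxq, hAqt, hqt]
          _ = ((d + 1 : ℕ) : ℕ∞) := by push_cast; ring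
      · have hsum' : gdist E q q' + gdist E q' r + gdist E r t = (d : ℕ∞) := by
          rw [← hsum, hqt]
        have h1ne : gdist E q q' ≠ ⊤ := fun h => by rw [h] at hsum'; simp at hsum'
        have h2ne : gdist E q' r ≠ ⊤ := fun h => by rw [h] at hsum'; simp at hsum'
        have h3ne : gdist E r t ≠ ⊤ := fun h => by rw [h] at hsum'; simp at hsum'
        obtain ⟨a, ha⟩ := enat_exists_nat h1ne
        obtain ⟨b, hb2⟩ := enat_exists_nat h2ne
        obtain ⟨c, hc⟩ := enat_exists_nat h3ne
        have habc : a + b + c = d := by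
          have : ((a + b + c : ℕ) : ℕ∞) = ((d : ℕ) : ℕ∞) := by
            rw [Nat.cast_add, Nat.cast_add, ha, hb2, hc]
            exact hsum'
          exact_mod_cast this
        have hAq'r : A q' r = gdist E q' r := A_eq_gdist_of_le_one E A hdiag hedge hq'r1
        obtain ⟨m, hm, hbnd⟩ := ih c (by omega) r t hrX hc.symm
        refine ⟨m + 1, by omega, ?_⟩
        have hMxr : M x r ≤ ((1 + a + b : ℕ) : ℕ∞) := by
          have h0 := hM x q q' r hx hrX
          rw [hAxq, hAqq', hAq'r, ← ha, ← hb2] at h0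
          refine h0.trans (le_of_eq ?_)
          push_cast
          ring_nf
        calc mp (mpPow M (m + 1)) R x t
            ≤ M x r + mp (mpPow M m) R r t := mp_pow_succ_bound M R m x r t
          _ ≤ ((1 + a + b : ℕ) : ℕ∞) + ((c : ℕ) : ℕ∞) := add_le_add hMxr hbnd
          _ = ((d + 1 : ℕ) : ℕ∞) := by
              rw [← Nat.cast_add]
              congr 1
              omega

end Key

/-- **Lemma 6.4, abstract form.** Under the hypotheses (H0)–(H2) on the matrix `A` and the
set `X`, the matrix `A* = min(A, (A ⋆ A[V,X]) ⋆ (A[X,V] ⋆ A ⋆ A[V,X])^n ⋆ (A[X,V] ⋆ A))`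
(powers w.r.t. the min-plus product, minimum entrywise) satisfies `A*_{s,t} = δ_G(s,t)`. -/
theorem minplus_formula_correct {V : Type*} [Fintype V]
    (E : V → V → Prop) (X : Set V) (n : ℕ)
    (hn : Fintype.card V = n) (hn1 : 1 ≤ n)
    (A : V → V → ℕ∞)
    (hdiag : ∀ u : V, A u u = 0)
    (hedge : ∀ u v : V, u ≠ v → E u v → A u v = 1)
    (hub : ∀ u v : V, gdist E u v ≤ A u v)
    (H1 : ∀ s t : V, s ∉ X → gdist E s t ≠ ⊤ →
      A s t = gdist E s t ∨
      ∃ q r : V, r ∈ X ∧ A s q = gdist E s q ∧ gdist E q r ≤ 1 ∧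
        1 ≤ gdist E s q + gdist E q r ∧
        gdist E s t = gdist E s q + gdist E q r + gdist E r t)
    (H2 : ∀ s t : V, t ∉ X → gdist E s t ≠ ⊤ →
      A s t = gdist E s t ∨
      ∃ q r : V, r ∈ X ∧ A q t = gdist E q t ∧ gdist E r q ≤ 1 ∧
        1 ≤ gdist E r q + gdist E q t ∧
        gdist E s t = gdist E s r + gdist E r q + gdist E q t) :
    ∀ s t : V,
      min (A s t)
        ((mp (mp A (maskCol X A))
          (mp (mpPow (mp (mp (maskRow X A) A) (maskCol X A)) n)
            (mp (maskRow X A) A))) s t)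
      = gdist E s t := by
  intro s t
  have hNe : Nonempty V := ⟨s⟩
  have hmp : ∀ P Q : V → V → ℕ∞, (∀ i j, gdist E i j ≤ P i j) →
      (∀ i j, gdist E i j ≤ Q i j) → ∀ i j, gdist E i j ≤ mp P Q i j :=
    fun P Q hP hQ i j =>
      le_iInf fun k => (gdist_triangle E i k j).trans (add_le_add (hP i k) (hQ k j))
  have hmaskR : ∀ i j, gdist E i j ≤ maskRow X A i j := by
    intro i j; unfold maskRow; split
    · exact hub i j
    · exact le_top
  have hmaskC : ∀ i j, gdist E i j ≤ maskCol X A i j := by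
    intro i j; unfold maskCol; split
    · exact hub i j
    · exact le_top
  have hpow : ∀ m i j,
      gdist E i j ≤ mpPow (mp (mp (maskRow X A) A) (maskCol X A)) m i j := by
    intro m
    induction m with
    | zero =>
      intro i j
      by_cases h : i = j
      · subst h; simp [mpPow, gdist_self]
      · simp [mpPow, h]
    | succ m ih => exact hmp _ _ ih (hmp _ _ (hmp _ _ hmaskR hub) hmaskC)
  have hBlow := hmp _ _ (hmp _ _ hub hmaskC)
    (hmp _ _ (hpow n) (hmp _ _ hmaskR hub))
  refine le_antisymm ?_ (le_min (hub s t) (hBlow s t))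
  by_cases hne : gdist E s t = ⊤
  · rw [hne]; exact le_top
  obtain ⟨dd, hdd⟩ := enat_exists_nat hne
  rw [← hdd]
  have hdn : dd ≤ n := by
    have h0 := gdist_le_card E (s := s) (t := t) hne
    rw [hn, ← hdd] at h0
    exact Nat.cast_le.mp h0
  by_cases hA : A s t = gdist E s t
  · exact (min_le_left _ _).trans (le_of_eq (hA.trans hdd.symm))
  have hor : ∀ z : V, mp (mp (maskRow X A) A) (maskCol X A) z z = 0 ∨
      ∀ t' : V, mp (maskRow X A) A z t' = ⊤ := by
    intro z
    by_cases hz : z ∈ X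
    · left
      refine le_antisymm ?_ zero_le
      calc mp (mp (maskRow X A) A) (maskCol X A) z z
          ≤ mp (maskRow X A) A z z + maskCol X A z z := mp_le _ _ z z z
        _ ≤ (maskRow X A z z + A z z) + maskCol X A z z :=
            add_le_add_left (mp_le _ _ z z z) _
        _ = 0 := by simp [maskRow, maskCol, hz, hdiag]
    · right
      intro t'
      rw [mp]
      simp [maskRow, hz]
  have pad := mp_pow_pad (mp (mp (maskRow X A) A) (maskCol X A)) (mp (maskRow X A) A) hor t
  by_cases hsX : s ∈ X
  · obtain ⟨m, hm, hbnd⟩ := keyD E X A hdiag hedge H1 dd s t hsX hdd.symm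
    have h1 : mp (mpPow (mp (mp (maskRow X A) A) (maskCol X A)) n) (mp (maskRow X A) A) s t
        ≤ (dd : ℕ∞) := (pad m n (by omega) s).trans hbnd
    have hLss : mp A (maskCol X A) s s ≤ 0 :=
      (mp_le A (maskCol X A) s s s).trans (by simp [maskCol, hsX, hdiag])
    calc min (A s t) ((mp (mp A (maskCol X A))
          (mp (mpPow (mp (mp (maskRow X A) A) (maskCol X A)) n) (mp (maskRow X A) A))) s t)
        ≤ _ := min_le_right _ _
      _ ≤ mp A (maskCol X A) s s +
          mp (mpPow (mp (mp (maskRow X A) A) (maskCol X A)) n) (mp (maskRow X A) A) s t :=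
            mp_le _ _ s s t
      _ ≤ 0 + (dd : ℕ∞) := add_le_add hLss h1
      _ = (dd : ℕ∞) := zero_add _
  · rcases H1 s t hsX hne with hA' | ⟨q, r, hrX, hAsq, hqr1, -, hsum⟩
    · exact absurd hA' hA
    · have hsum' : gdist E s q + gdist E q r + gdist E r t = (dd : ℕ∞) := by
        rw [← hsum]; exact hdd.symm
      have h1ne : gdist E s q ≠ ⊤ := fun h => by rw [h] at hsum'; simp at hsum'
      have h2ne : gdist E q r ≠ ⊤ := fun h => by rw [h] at hsum'; simp at hsum'
      have h3ne : gdist E r t ≠ ⊤ := fun h => by rw [h] at hsum'; simp at hsum'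
      obtain ⟨a, ha⟩ := enat_exists_nat h1ne
      obtain ⟨b, hb⟩ := enat_exists_nat h2ne
      obtain ⟨c, hc⟩ := enat_exists_nat h3ne
      have habc : a + b + c = dd := by
        have h0 : ((a + b + c : ℕ) : ℕ∞) = ((dd : ℕ) : ℕ∞) := by
          rw [Nat.cast_add, Nat.cast_add, ha, hb, hc]
          exact hsum'
        exact_mod_cast h0
      have hAqr : A q r = gdist E q r := A_eq_gdist_of_le_one E A hdiag hedge hqr1
      have hL : mp A (maskCol X A) s r ≤ ((a + b : ℕ) : ℕ∞) := by
        refine (mp_le A (maskCol X A) s q r).trans (le_of_eq ?_)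
        rw [show maskCol X A q r = A q r from by simp [maskCol, hrX]]
        rw [hAsq, hAqr, ← ha, ← hb, Nat.cast_add]
      obtain ⟨m, hm, hbnd⟩ := keyD E X A hdiag hedge H1 c r t hrX hc.symm
      have h1 : mp (mpPow (mp (mp (maskRow X A) A) (maskCol X A)) n) (mp (maskRow X A) A) r t
          ≤ (c : ℕ∞) := (pad m n (by omega) r).trans hbnd
      calc min (A s t) ((mp (mp A (maskCol X A))
            (mp (mpPow (mp (mp (maskRow X A) A) (maskCol X A)) n) (mp (maskRow X A) A))) s t)
          ≤ _ := min_le_right _ _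
        _ ≤ mp A (maskCol X A) s r +
            mp (mpPow (mp (mp (maskRow X A) A) (maskCol X A)) n) (mp (maskRow X A) A) r t :=
              mp_le _ _ s r t
        _ ≤ ((a + b : ℕ) : ℕ∞) + ((c : ℕ) : ℕ∞) := add_le_add hL h1
        _ = (dd : ℕ∞) := by rw [← Nat.cast_add, habc]


end Paper
end

section
/- For every directed graph G = (V,E) with |V| = n there exists a subgraph G' = (V,E') with E' ⊆ E and |E'| ≤ 2n such that for all u,v ∈ V, the vertices u and v are strongly connected in G' if and only if they are strongly connected in G; equivalently, G' has exactly the same strongly connected components as G. -/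
open scoped Classical

namespace Paper

variable {V : Type*}

/-- `v` is reachable from `u` (length-0 walks allowed). -/
def Reach (E : V → V → Prop) (u v : V) : Prop :=
  ∃ (k : ℕ) (p : ℕ → V), p 0 = u ∧ p k = v ∧ IsWalk E k p

lemma reach_refl (E : V → V → Prop) (u : V) : Reach E u u :=
  ⟨0, fun _ => u, rfl, rfl, fun i hi => absurd hi (Nat.not_lt_zero i)⟩

lemma reach_single {E : V → V → Prop} {u v : V} (h : E u v) : Reach E u v := by
  refine ⟨1, fun i => if i = 0 then u else v, by simp, by simp, ?_⟩
  intro i hi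
  interval_cases i
  simpa using h

lemma reach_trans {E : V → V → Prop} {u v w : V}
    (h1 : Reach E u v) (h2 : Reach E v w) : Reach E u w := by
  obtain ⟨k, p, hp0, hpk, hp⟩ := h1
  obtain ⟨l, q, hq0, hql, hq⟩ := h2
  refine ⟨k + l, fun i => if i ≤ k then p i else q (i - k), by simp [hp0], ?_, ?_⟩
  · by_cases h : k + l ≤ k
    · have hl : l = 0 := by omega
      have hk : k + l = k := by omega
      show (if k + l ≤ k then p (k + l) else q (k + l - k)) = w
      rw [hk, if_pos le_rfl, hpk, ← hq0, ← hl, hql]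
    · simp only [if_neg h]
      have : k + l - k = l := by omega
      rw [this, hql]
  · intro i hi
    by_cases h1 : i + 1 ≤ k
    · have h2 : i ≤ k := by omega
      simp only [if_pos h1, if_pos h2]
      exact hp i (by omega)
    · by_cases h2 : i ≤ k
      · have hik : i = k := by omega
        have hl : 0 < l := by omega
        simp only [if_pos h2, if_neg h1]
        have : i + 1 - k = 1 := by omega
        rw [this, hik, hpk, ← hq0]
        exact hq 0 hl
      · simp only [if_neg h1, if_neg h2]
        have h3 : i + 1 - k = (i - k) + 1 := by omega
        rw [h3]
        exact hq (i - k) (by omega)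

lemma reach_mono {E E' : V → V → Prop} (hE : ∀ u v, E' u v → E u v) {u v : V}
    (h : Reach E' u v) : Reach E u v := by
  obtain ⟨k, p, hp0, hpk, hp⟩ := h
  exact ⟨k, p, hp0, hpk, fun i hi => hE _ _ (hp i hi)⟩

/-- Minimal walk length from `u` to `v` (junk value `0` if unreachable). -/
noncomputable def wdist (E : V → V → Prop) (u v : V) : ℕ :=
  if h : Reach E u v then Nat.find h else 0

lemma wdist_spec {E : V → V → Prop} {u v : V} (h : Reach E u v) :
    ∃ p : ℕ → V, p 0 = u ∧ p (wdist E u v) = v ∧ IsWalk E (wdist E u v) p := by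
  rw [wdist, dif_pos h]
  exact Nat.find_spec h

lemma wdist_le {E : V → V → Prop} {u v : V} {m : ℕ}
    (h : ∃ p : ℕ → V, p 0 = u ∧ p m = v ∧ IsWalk E m p) : wdist E u v ≤ m := by
  have hr : Reach E u v := ⟨m, h⟩
  rw [wdist, dif_pos hr]
  exact Nat.find_le h

/-- The strong-connectivity setoid. -/
def scSetoid (E : V → V → Prop) : Setoid V :=
  ⟨fun u v => Reach E u v ∧ Reach E v u,
   ⟨fun u => ⟨reach_refl E u, reach_refl E u⟩,
    fun h => ⟨h.2, h.1⟩,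
    fun h1 h2 => ⟨reach_trans h1.1 h2.1, reach_trans h2.2 h1.2⟩⟩⟩

/-- A representative of each strongly connected component. -/
noncomputable def rep (E : V → V → Prop) (v : V) : V :=
  Quotient.out (Quotient.mk (scSetoid E) v)

lemma rep_sc (E : V → V → Prop) (v : V) :
    Reach E (rep E v) v ∧ Reach E v (rep E v) :=
  Quotient.mk_out (s := scSetoid E) v

lemma rep_eq {E : V → V → Prop} {u v : V}
    (h : Reach E u v ∧ Reach E v u) : rep E u = rep E v := by
  unfold rep
  rw [Quotient.sound (s := scSetoid E) h]

lemma exists_par (E : V → V → Prop) {v : V} (hne : v ≠ rep E v) :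
    ∃ w, E w v ∧ Reach E (rep E v) w ∧ Reach E w (rep E v) ∧
      wdist E (rep E v) w < wdist E (rep E v) v := by
  have hrv : Reach E (rep E v) v := (rep_sc E v).1
  have hvr : Reach E v (rep E v) := (rep_sc E v).2
  obtain ⟨p, hp0, hpd, hp⟩ := wdist_spec hrv
  set d := wdist E (rep E v) v with hd
  have hd0 : d ≠ 0 := by
    intro h0
    have h1 : p 0 = v := by rw [← h0, hpd]
    exact hne (h1 ▸ hp0)
  refine ⟨p (d - 1), ?_, ?_, ?_, ?_⟩
  · have := hp (d - 1) (by omega)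
    have h1 : d - 1 + 1 = d := by omega
    rwa [h1, hpd] at this
  · exact ⟨d - 1, p, hp0, rfl, fun i hi => hp i (by omega)⟩
  · refine reach_trans (reach_single ?_) hvr
    have := hp (d - 1) (by omega)
    have h1 : d - 1 + 1 = d := by omega
    rwa [h1, hpd] at this
  · have : wdist E (rep E v) (p (d - 1)) ≤ d - 1 :=
      wdist_le ⟨p, hp0, rfl, fun i hi => hp i (by omega)⟩
    omega

lemma exists_succ (E : V → V → Prop) {v : V} (hne : v ≠ rep E v) :
    ∃ w, E v w ∧ Reach E (rep E v) w ∧ Reach E w (rep E v) ∧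
      wdist E w (rep E v) < wdist E v (rep E v) := by
  have hrv : Reach E (rep E v) v := (rep_sc E v).1
  have hvr : Reach E v (rep E v) := (rep_sc E v).2
  obtain ⟨p, hp0, hpd, hp⟩ := wdist_spec hvr
  set d := wdist E v (rep E v) with hd
  have hd0 : d ≠ 0 := by
    intro h0
    rw [h0] at hpd
    exact hne (hp0 ▸ hpd)
  have hedge : E v (p 1) := by
    have := hp 0 (by omega)
    rwa [hp0] at this
  refine ⟨p 1, hedge, reach_trans hrv (reach_single hedge), ?_, ?_⟩
  · refine ⟨d - 1, fun i => p (i + 1), rfl, ?_, ?_⟩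
    · show p (d - 1 + 1) = rep E v
      have h1 : d - 1 + 1 = d := by omega
      rw [h1, hpd]
    · intro i hi
      exact hp (i + 1) (by omega)
  · have : wdist E (p 1) (rep E v) ≤ d - 1 := by
      refine wdist_le ⟨fun i => p (i + 1), rfl, ?_, fun i hi => hp (i + 1) (by omega)⟩
      show p (d - 1 + 1) = rep E v
      have h1 : d - 1 + 1 = d := by omega
      rw [h1, hpd]
    omega

/-- Parent of `v` on a shortest walk from the representative (junk if `v` is the rep). -/
noncomputable def par (E : V → V → Prop) (v : V) : V :=
  if h : v ≠ rep E v then Classical.choose (exists_par E h) else v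

lemma par_spec {E : V → V → Prop} {v : V} (h : v ≠ rep E v) :
    E (par E v) v ∧ Reach E (rep E v) (par E v) ∧ Reach E (par E v) (rep E v) ∧
      wdist E (rep E v) (par E v) < wdist E (rep E v) v := by
  rw [par, dif_pos h]
  exact Classical.choose_spec (exists_par E h)

/-- Successor of `v` on a shortest walk to the representative (junk if `v` is the rep). -/
noncomputable def succ (E : V → V → Prop) (v : V) : V :=
  if h : v ≠ rep E v then Classical.choose (exists_succ E h) else v

lemma succ_spec {E : V → V → Prop} {v : V} (h : v ≠ rep E v) :
    E v (succ E v) ∧ Reach E (rep E v) (succ E v) ∧ Reach E (succ E v) (rep E v) ∧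
      wdist E (succ E v) (rep E v) < wdist E v (rep E v) := by
  rw [succ, dif_pos h]
  exact Classical.choose_spec (exists_succ E h)

/-- The sparse subgraph: for each non-representative vertex, its parent edge and successor
edge. -/
noncomputable def Espar (E : V → V → Prop) : V → V → Prop :=
  fun u v => (v ≠ rep E v ∧ u = par E v) ∨ (u ≠ rep E u ∧ v = succ E u)

lemma Espar_sub (E : V → V → Prop) : ∀ u v, Espar E u v → E u v := by
  intro u v h
  rcases h with ⟨h1, h2⟩ | ⟨h1, h2⟩
  · rw [h2]; exact (par_spec h1).1
  · rw [h2]; exact (succ_spec h1).1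

lemma reach_rep_to (E : V → V → Prop) (v : V) : Reach (Espar E) (rep E v) v := by
  have H : ∀ d : ℕ, ∀ v : V, wdist E (rep E v) v ≤ d → Reach (Espar E) (rep E v) v := by
    intro d
    induction d with
    | zero =>
      intro v hv
      by_cases h : v = rep E v
      · rw [← h]; exact reach_refl _ v
      · have := (par_spec h).2.2.2
        omega
    | succ d IH =>
      intro v hv
      by_cases h : v = rep E v
      · rw [← h]; exact reach_refl _ v
      · obtain ⟨he, hr1, hr2, hlt⟩ := par_spec h
        have hrep : rep E (par E v) = rep E v := by
          rw [rep_eq (u := par E v) (v := rep E v) ⟨hr2, hr1⟩]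
          unfold rep
          rw [Quotient.out_eq]
        have := IH (par E v) (by rw [hrep]; omega)
        rw [hrep] at this
        exact reach_trans this (reach_single (Or.inl ⟨h, rfl⟩))
  exact H (wdist E (rep E v) v) v le_rfl

lemma reach_to_rep (E : V → V → Prop) (v : V) : Reach (Espar E) v (rep E v) := by
  have H : ∀ d : ℕ, ∀ v : V, wdist E v (rep E v) ≤ d → Reach (Espar E) v (rep E v) := by
    intro d
    induction d with
    | zero =>
      intro v hv
      by_cases h : v = rep E v
      · rw [← h]; exact reach_refl _ v
      · have := (succ_spec h).2.2.2
        omega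
    | succ d IH =>
      intro v hv
      by_cases h : v = rep E v
      · rw [← h]; exact reach_refl _ v
      · obtain ⟨he, hr1, hr2, hlt⟩ := succ_spec h
        have hrep : rep E (succ E v) = rep E v := by
          rw [rep_eq (u := succ E v) (v := rep E v) ⟨hr2, hr1⟩]
          unfold rep
          rw [Quotient.out_eq]
        have := IH (succ E v) (by rw [hrep]; omega)
        rw [hrep] at this
        exact reach_trans (reach_single (Or.inr ⟨h, rfl⟩)) this
  exact H (wdist E v (rep E v)) v le_rfl

/-- **Lemma 6.6.** Every digraph `G` on `n` vertices has a subgraph `G'` with at most `2n`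
edges that has exactly the same strongly connected components (i.e., two vertices are
strongly connected in `G'` iff they are strongly connected in `G`). -/
theorem scc_sparsifier {V : Type*} [Fintype V]
    (E : V → V → Prop) (n : ℕ) (hn : Fintype.card V = n) :
    ∃ E' : V → V → Prop,
      (∀ u v : V, E' u v → E u v) ∧
      ({q : V × V | E' q.1 q.2}).ncard ≤ 2 * n ∧
      (∀ u v : V, (Reach E' u v ∧ Reach E' v u) ↔ (Reach E u v ∧ Reach E v u)) := by
  refine ⟨Espar E, Espar_sub E, ?_, ?_⟩
  · have hsub : {q : V × V | Espar E q.1 q.2} ⊆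
        ((fun v => (par E v, v)) '' Set.univ) ∪ ((fun v => (v, succ E v)) '' Set.univ) := by
      rintro ⟨u, v⟩ h
      rcases h with ⟨h1, h2⟩ | ⟨h1, h2⟩
      · left; exact ⟨v, Set.mem_univ v, Prod.ext h2.symm rfl⟩
      · right; exact ⟨u, Set.mem_univ u, Prod.ext rfl h2.symm⟩
    calc ({q : V × V | Espar E q.1 q.2}).ncard
        ≤ (((fun v => (par E v, v)) '' Set.univ) ∪
            ((fun v => (v, succ E v)) '' Set.univ)).ncard :=
          Set.ncard_le_ncard hsub (Set.toFinite _)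
      _ ≤ ((fun v => (par E v, v)) '' Set.univ).ncard +
            ((fun v => (v, succ E v)) '' Set.univ).ncard := Set.ncard_union_le _ _
      _ ≤ (Set.univ : Set V).ncard + (Set.univ : Set V).ncard := by
          gcongr
          · exact Set.ncard_image_le (Set.toFinite _)
          · exact Set.ncard_image_le (Set.toFinite _)
      _ ≤ 2 * n := by
          rw [Set.ncard_univ, Nat.card_eq_fintype_card, hn]
          omega
  · intro u v
    constructor
    · rintro ⟨h1, h2⟩
      exact ⟨reach_mono (Espar_sub E) h1, reach_mono (Espar_sub E) h2⟩
    · rintro ⟨h1, h2⟩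
      have hrep : rep E u = rep E v := rep_eq ⟨h1, h2⟩
      have ha : Reach (Espar E) u (rep E u) := reach_to_rep E u
      have hb : Reach (Espar E) (rep E v) v := reach_rep_to E v
      have hc : Reach (Espar E) v (rep E v) := reach_to_rep E v
      have hd : Reach (Espar E) (rep E u) u := reach_rep_to E u
      exact ⟨reach_trans ha (hrep ▸ hb), reach_trans hc (hrep ▸ hd)⟩

end Paper
end
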